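/- Let F ⊆ ℝ^n be a convex polyhedron, V ⊆ ℝ^n a polyhedron, and u, v ∈ ℝ^n. Suppose there is a differentiable function f : [0,∞) → ℝ^n with f(0) = u and f'(t) ∈ F for all t ≥ 0, and a time δ ≥ 0 such that f(δ) = v and f(t) ∉ V for all 0 ≤ t ≤ δ. Then there exist k ≥ 0, durations δ_1, …, δ_k ≥ 0, vectors c_1, …, c_k ∈ F, and points u_0 = u, u_i = u_{i-1} + δ_i·c_i with u_k = v, such that every point u_{i-1} + t·c_i with 0 ≤ t ≤ δ_i avoids V (i.e., the piecewise straight-line trajectory from u to v with slopes in F avoids V). -/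

import Mathlib

open Set

/-- Points of `ℝ^n`. -/
abbrev Vec (n : ℕ) := Fin n → ℝ

/-- A (strict or non-strict) affine half-space of `ℝ^ι`. -/
def IsHalfspace {ι : Type} [Fintype ι] (H : Set (ι → ℝ)) : Prop :=
  ∃ (a : ι → ℝ) (b : ℝ), H = {x | (∑ i, a i * x i) < b} ∨ H = {x | (∑ i, a i * x i) ≤ b}

/-- A convex polyhedron: a finite intersection of half-spaces. -/
def IsConvexPolyhedron {ι : Type} [Fintype ι] (P : Set (ι → ℝ)) : Prop :=
  ∃ (k : ℕ) (Hs : Fin k → Set (ι → ℝ)), (∀ i, IsHalfspace (Hs i)) ∧ P = ⋂ i, Hs i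

/-- A polyhedron: a finite union of convex polyhedra. -/
def IsPolyhedron {ι : Type} [Fintype ι] (G : Set (ι → ℝ)) : Prop :=
  ∃ (k : ℕ) (Ps : Fin k → Set (ι → ℝ)), (∀ i, IsConvexPolyhedron (Ps i)) ∧ G = ⋃ i, Ps i

/-- The pre-flow of `G` with respect to `F`:
`preflow_F(G) = {u | ∃ δ ≥ 0, ∃ c ∈ F, u + δ·c ∈ G}`. -/
def preflow {n : ℕ} (F G : Set (Vec n)) : Set (Vec n) :=
  {u | ∃ δ : ℝ, 0 ≤ δ ∧ ∃ c ∈ F, u + δ • c ∈ G}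

/-- The boundary of two sets: `bound(G, G') = (closure G ∩ G') ∪ (G ∩ closure G')`. -/
def bnd {n : ℕ} (G G' : Set (Vec n)) : Set (Vec n) :=
  (closure G ∩ G') ∪ (G ∩ closure G')

/-- `prwa_F(U, V)`: the points from which a piecewise straight-line trajectory with slopes
in `F` reaches `U`, every point along the way (except possibly the final one) lying in
`(ℝ^n \ V) ∪ U`. -/
def prwa {n : ℕ} (F U V : Set (Vec n)) : Set (Vec n) :=
  {u | ∃ (k : ℕ) (d : Fin k → ℝ) (c : Fin k → Vec n) (p : Fin (k + 1) → Vec n),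
    (∀ i, 0 ≤ d i) ∧ (∀ i, c i ∈ F) ∧ p 0 = u ∧
    (∀ i : Fin k, p i.succ = p i.castSucc + d i • c i) ∧
    p (Fin.last k) ∈ U ∧
    ∀ (i : Fin k) (t : ℝ), 0 ≤ t → t ≤ d i →
      p i.castSucc + t • c i = p (Fin.last k) ∨ p i.castSucc + t • c i ∈ Vᶜ ∪ U}

/-- `rwa_F(U, V)`: the points from which some differentiable trajectory with derivative in
`F` may reach `U` while staying in `(ℝ^n \ V) ∪ U` beforehand. -/
def rwaSet {n : ℕ} (F U V : Set (Vec n)) : Set (Vec n) :=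
  {u | ∃ f : ℝ → Vec n, Differentiable ℝ f ∧ f 0 = u ∧ (∀ t, 0 ≤ t → deriv f t ∈ F) ∧
    ∃ δ : ℝ, 0 ≤ δ ∧ f δ ∈ U ∧ ∀ δ', 0 ≤ δ' → δ' < δ → f δ' ∈ Vᶜ ∪ U}

open Filter Topology

private lemma dot_combo {n : ℕ} (a x y : Vec n) (l : ℝ) :
    ∑ i, a i * ((1 - l) • x + l • y) i
      = (1 - l) * (∑ i, a i * x i) + l * (∑ i, a i * y i) := by
  rw [Finset.mul_sum, Finset.mul_sum, ← Finset.sum_add_distrib]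
  refine Finset.sum_congr rfl fun i _ => ?_
  simp only [Pi.add_apply, Pi.smul_apply, smul_eq_mul]
  ring

/-- Near a time `t` at which the continuous curve `g` is outside the convex polyhedron `P`,
the segment from `g t` to `g s` stays outside `P` (provided `g s ∉ P`). -/
private lemma local_avoid_cp {n : ℕ} (P : Set (Vec n)) (hP : IsConvexPolyhedron P)
    (g : ℝ → Vec n) (hg : Continuous g) (t : ℝ) (hgt : g t ∉ P) :
    ∀ᶠ s in 𝓝 t, g s ∉ P → ∀ l ∈ Icc (0:ℝ) 1, (1 - l) • g t + l • g s ∉ P := by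
  obtain ⟨k, Hs, hHs, rfl⟩ := hP
  choose a b hab using hHs
  have hcont : ∀ i : Fin k, Continuous (fun s => ∑ j, a i j * g s j) :=
    fun i => continuous_finset_sum _ fun j _ =>
      continuous_const.mul ((continuous_apply j).comp hg)
  have hE : ∀ᶠ s in 𝓝 t, ∀ i : Fin k,
      ((∑ j, a i j * g t j) < b i → (∑ j, a i j * g s j) < b i) ∧
      (b i < (∑ j, a i j * g t j) → b i < (∑ j, a i j * g s j)) := by
    rw [eventually_all]
    intro i
    rcases lt_trichotomy (∑ j, a i j * g t j) (b i) with h1 | h1 | h1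
    · have hev : ∀ᶠ s in 𝓝 t, (∑ j, a i j * g s j) < b i :=
        (isOpen_lt (hcont i) continuous_const).mem_nhds h1
      exact hev.mono fun s hs => ⟨fun _ => hs, fun h2 => absurd h2 (by linarith)⟩
    · refine Eventually.of_forall fun s => ⟨?_, ?_⟩ <;>
        (intro h2; rw [h1] at h2; exact absurd h2 (lt_irrefl _))
    · have hev : ∀ᶠ s in 𝓝 t, b i < (∑ j, a i j * g s j) :=
        (isOpen_lt continuous_const (hcont i)).mem_nhds h1
      exact hev.mono fun s hs => ⟨fun h2 => absurd h2 (by linarith), fun _ => hs⟩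
  refine hE.mono fun s hEs hsP l hl hmem => ?_
  have hex : ∃ i, g s ∉ Hs i := by
    by_contra hcon
    push_neg at hcon
    exact hsP (Set.mem_iInter.mpr hcon)
  obtain ⟨i, hi⟩ := hex
  have hmem' := Set.mem_iInter.mp hmem i
  have hcombo := dot_combo (a i) (g t) (g s) l
  have hb : (1 - l) * b i + l * b i = b i := by ring
  rcases hab i with hcase | hcase
  · rw [hcase] at hi hmem'
    have hgs : b i ≤ ∑ j, a i j * g s j := not_lt.mp hi
    have hgt' : b i ≤ ∑ j, a i j * g t j := by
      by_contra h
      exact hi ((hEs i).1 (not_le.mp h))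
    have hm : (∑ j, a i j * ((1-l) • g t + l • g s) j) < b i := hmem'
    have h1 : (1-l) * b i ≤ (1-l) * ∑ j, a i j * g t j :=
      mul_le_mul_of_nonneg_left hgt' (by linarith [hl.2])
    have h2 : l * b i ≤ l * ∑ j, a i j * g s j :=
      mul_le_mul_of_nonneg_left hgs hl.1
    linarith
  · rw [hcase] at hi hmem'
    have hgs : b i < ∑ j, a i j * g s j := not_le.mp hi
    have hgt' : b i ≤ ∑ j, a i j * g t j := by
      by_contra h
      exact absurd ((hEs i).1 (not_le.mp h)) (not_lt.mpr hgs.le)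
    rcases eq_or_lt_of_le hl.1 with h0 | h0
    · apply hgt
      have he : (1 - l) • g t + l • g s = g t := by rw [← h0]; simp
      rwa [he] at hmem
    · have hm : (∑ j, a i j * ((1-l) • g t + l • g s) j) ≤ b i := hmem'
      have h1 : (1-l) * b i ≤ (1-l) * ∑ j, a i j * g t j :=
        mul_le_mul_of_nonneg_left hgt' (by linarith [hl.2])
      have h2 : l * b i < l * ∑ j, a i j * g s j :=
        mul_lt_mul_of_pos_left hgs h0
      linarith

private lemma local_avoid {n : ℕ} (V : Set (Vec n)) (hV : IsPolyhedron V)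
    (g : ℝ → Vec n) (hg : Continuous g) (t : ℝ) (hgt : g t ∉ V) :
    ∀ᶠ s in 𝓝 t, g s ∉ V → ∀ l ∈ Icc (0:ℝ) 1, (1 - l) • g t + l • g s ∉ V := by
  obtain ⟨m, Ps, hPs, rfl⟩ := hV
  have hgt' : ∀ j, g t ∉ Ps j := fun j hj => hgt (Set.mem_iUnion.mpr ⟨j, hj⟩)
  have hE : ∀ᶠ s in 𝓝 t, ∀ j : Fin m, g s ∉ Ps j →
      ∀ l ∈ Icc (0:ℝ) 1, (1 - l) • g t + l • g s ∉ Ps j := by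
    rw [eventually_all]
    exact fun j => local_avoid_cp (Ps j) (hPs j) g hg t (hgt' j)
  refine hE.mono fun s hs hsV l hl hmem => ?_
  obtain ⟨j, hj⟩ := Set.mem_iUnion.mp hmem
  exact hs j (fun h => hsV (Set.mem_iUnion.mpr ⟨j, h⟩)) l hl hj

/-- The mean slope of a differentiable trajectory with derivatives in the convex
polyhedron `F` lies itself in `F`. -/
private lemma slope_mem {n : ℕ} (F : Set (Vec n)) (hF : IsConvexPolyhedron F)
    (f : ℝ → Vec n) (hdiff : Differentiable ℝ f)
    (hder : ∀ t : ℝ, 0 ≤ t → deriv f t ∈ F) {s s' : ℝ} (hs : 0 ≤ s) (h : s < s') :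
    (s' - s)⁻¹ • (f s' - f s) ∈ F := by
  obtain ⟨k, Hs, hHs, rfl⟩ := hF
  rw [Set.mem_iInter]
  intro i
  obtain ⟨a, b, hab⟩ := hHs i
  have hφ : ∀ t : ℝ, HasDerivAt (fun t => ∑ j, a j * f t j) (∑ j, a j * deriv f t j) t := by
    intro t
    have h1 : HasDerivAt f (deriv f t) t := (hdiff t).hasDerivAt
    exact HasDerivAt.fun_sum fun j _ => ((hasDerivAt_pi.mp h1) j).const_mul (a j)
  obtain ⟨ξ, hξ, hslope⟩ := exists_hasDerivAt_eq_slope (fun t => ∑ j, a j * f t j)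
    (fun t => ∑ j, a j * deriv f t j) h
    (Continuous.continuousOn (continuous_iff_continuousAt.mpr fun t => (hφ t).continuousAt))
    (fun x _ => hφ x)
  have hξF : deriv f ξ ∈ ⋂ i, Hs i := hder ξ (le_trans hs hξ.1.le)
  have hξi := Set.mem_iInter.mp hξF i
  have hkey : (∑ j, a j * ((s' - s)⁻¹ • (f s' - f s)) j) = ∑ j, a j * deriv f ξ j := by
    rw [hslope]
    have hne : s' - s ≠ 0 := sub_ne_zero.mpr (ne_of_gt h)
    calc ∑ j, a j * ((s' - s)⁻¹ • (f s' - f s)) j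
        = (s' - s)⁻¹ * ∑ j, (a j * f s' j - a j * f s j) := by
          rw [Finset.mul_sum]
          refine Finset.sum_congr rfl fun j _ => ?_
          simp only [Pi.smul_apply, Pi.sub_apply, smul_eq_mul]
          ring
      _ = ((∑ j, a j * f s' j) - ∑ j, a j * f s j) / (s' - s) := by
          rw [Finset.sum_sub_distrib, inv_mul_eq_div]
  rcases hab with hcase | hcase
  · rw [hcase] at hξi ⊢
    show (∑ j, a j * ((s' - s)⁻¹ • (f s' - f s)) j) < b
    rw [hkey]; exact hξi
  · rw [hcase] at hξi ⊢
    show (∑ j, a j * ((s' - s)⁻¹ • (f s' - f s)) j) ≤ b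
    rw [hkey]; exact hξi

/-- A "good" time `T`: there is a monotone finite sequence of times from `0` to `T`
such that the segments between the values of `f` at consecutive times avoid `V`. -/
private def GoodTime {n : ℕ} (f : ℝ → Vec n) (V : Set (Vec n)) (δ T : ℝ) : Prop :=
  ∃ (k : ℕ) (s : Fin (k+1) → ℝ), s 0 = 0 ∧ s (Fin.last k) = T ∧
    (∀ i, s i ∈ Icc 0 δ) ∧ (∀ i : Fin k, s i.castSucc ≤ s i.succ) ∧
    (∀ i : Fin k, ∀ l ∈ Icc (0:ℝ) 1,
      (1 - l) • f (s i.castSucc) + l • f (s i.succ) ∉ V)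

private lemma goodTime_ext {n : ℕ} {f : ℝ → Vec n} {V : Set (Vec n)} {δ T T' : ℝ}
    (hG : GoodTime f V δ T) (hT' : T' ∈ Icc 0 δ) (hle : T ≤ T')
    (hnew : ∀ l ∈ Icc (0:ℝ) 1, (1 - l) • f T + l • f T' ∉ V) : GoodTime f V δ T' := by
  obtain ⟨k, s, h0, hlast, hIcc, hm, hsg⟩ := hG
  refine ⟨k + 1, Fin.snoc s T', ?_, ?_, ?_, ?_, ?_⟩
  · rw [show (0 : Fin (k+2)) = Fin.castSucc 0 by simp, Fin.snoc_castSucc]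
    exact h0
  · rw [Fin.snoc_last]
  · intro i
    refine Fin.lastCases ?_ (fun j => ?_) i
    · rw [Fin.snoc_last]; exact hT'
    · rw [Fin.snoc_castSucc]; exact hIcc j
  · intro i
    refine Fin.lastCases ?_ (fun j => ?_) i
    · rw [Fin.succ_last, Fin.snoc_last, Fin.snoc_castSucc, hlast]; exact hle
    · rw [Fin.succ_castSucc, Fin.snoc_castSucc, Fin.snoc_castSucc]; exact hm j
  · intro i
    refine Fin.lastCases ?_ (fun j => ?_) i
    · rw [Fin.succ_last, Fin.snoc_last, Fin.snoc_castSucc, hlast]; exact hnew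
    · rw [Fin.succ_castSucc, Fin.snoc_castSucc, Fin.snoc_castSucc]; exact hsg j

/-- If a differentiable trajectory with derivative in a convex polyhedron
`F` leads from `u` to `v` avoiding the polyhedron `V`, then there is a piecewise
straight-line trajectory with slopes in `F` from `u` to `v` avoiding `V`. -/
theorem straightline_avoid {n : ℕ} (F V : Set (Vec n))
    (hF : IsConvexPolyhedron F) (hV : IsPolyhedron V) (u v : Vec n)
    (f : ℝ → Vec n) (hdiff : Differentiable ℝ f) (h0 : f 0 = u)
    (hder : ∀ t : ℝ, 0 ≤ t → deriv f t ∈ F)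
    (δ : ℝ) (hδ : 0 ≤ δ) (hfv : f δ = v)
    (havoid : ∀ t : ℝ, 0 ≤ t → t ≤ δ → f t ∉ V) :
    ∃ (k : ℕ) (d : Fin k → ℝ) (c : Fin k → Vec n) (p : Fin (k + 1) → Vec n),
      (∀ i, 0 ≤ d i) ∧ (∀ i, c i ∈ F) ∧ p 0 = u ∧ p (Fin.last k) = v ∧
      (∀ i : Fin k, p i.succ = p i.castSucc + d i • c i) ∧
      (∀ (i : Fin k) (t : ℝ), 0 ≤ t → t ≤ d i → p i.castSucc + t • c i ∉ V) := by
  classical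
  have hfc : Continuous f := hdiff.continuous
  have h0G : GoodTime f V δ 0 :=
    ⟨0, fun _ => 0, rfl, rfl, fun _ => ⟨le_refl 0, hδ⟩,
      fun i => Fin.elim0 i, fun i => Fin.elim0 i⟩
  set A : Set ℝ := {T | T ∈ Icc 0 δ ∧ GoodTime f V δ T} with hA
  have h0A : (0:ℝ) ∈ A := ⟨⟨le_refl 0, hδ⟩, h0G⟩
  have hne : A.Nonempty := ⟨0, h0A⟩
  have hbdd : BddAbove A := ⟨δ, fun x hx => hx.1.2⟩
  set T := sSup A with hT
  have hT0 : 0 ≤ T := le_csSup hbdd h0A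
  have hTδ : T ≤ δ := csSup_le hne fun x hx => hx.1.2
  have hloc := local_avoid V hV f hfc T (havoid T hT0 hTδ)
  rw [Metric.eventually_nhds_iff] at hloc
  obtain ⟨ε, hε, hball⟩ := hloc
  have hTA : GoodTime f V δ T := by
    obtain ⟨x, hxA, hx⟩ := exists_lt_of_lt_csSup hne (show T - ε < sSup A by
      rw [← hT]; linarith)
    have hxT : x ≤ T := le_csSup hbdd hxA
    have hdist : dist x T < ε := by
      rw [Real.dist_eq, abs_lt]; constructor <;> linarith
    have hseg := hball hdist (havoid x hxA.1.1 hxA.1.2)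
    refine goodTime_ext hxA.2 ⟨hT0, hTδ⟩ hxT ?_
    intro l hlm
    have h2 := hseg (1 - l) ⟨by linarith [hlm.2], by linarith [hlm.1]⟩
    have he : (1 - (1 - l)) • f T + (1 - l) • f x = (1 - l) • f x + l • f T := by
      rw [show (1 - (1 - l)) = l by ring, add_comm]
    rwa [he] at h2
  have hTeq : T = δ := by
    by_contra hne'
    have hlt : T < δ := lt_of_le_of_ne hTδ hne'
    set T' := min δ (T + ε / 2) with hT'def
    have hT'1 : T < T' := lt_min hlt (by linarith)
    have hT'2 : T' ≤ δ := min_le_left _ _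
    have hT'3 : T' ≤ T + ε / 2 := min_le_right _ _
    have hdist : dist T' T < ε := by
      rw [Real.dist_eq, abs_lt]; constructor <;> linarith
    have hsg := hball hdist (havoid T' (by linarith) hT'2)
    have hG' : GoodTime f V δ T' := goodTime_ext hTA ⟨by linarith, hT'2⟩ hT'1.le hsg
    have : T' ≤ T := le_csSup hbdd ⟨⟨by linarith, hT'2⟩, hG'⟩
    linarith
  rw [hTeq] at hTA
  obtain ⟨k, s, hs0, hslast, hsIcc, hsm, hsg⟩ := hTA
  have hc0 : deriv f 0 ∈ F := hder 0 le_rfl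
  refine ⟨k, fun i => s i.succ - s i.castSucc,
    fun i => if s i.castSucc = s i.succ then deriv f 0
             else (s i.succ - s i.castSucc)⁻¹ • (f (s i.succ) - f (s i.castSucc)),
    fun i => f (s i), fun i => sub_nonneg.mpr (hsm i), ?_, ?_, ?_, ?_, ?_⟩
  · intro i
    by_cases h : s i.castSucc = s i.succ
    · simp only [if_pos h]; exact hc0
    · simp only [if_neg h]
      exact slope_mem F hF f hdiff hder (hsIcc i.castSucc).1 (lt_of_le_of_ne (hsm i) h)
  · show f (s 0) = u
    rw [hs0, h0]
  · show f (s (Fin.last k)) = v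
    rw [hslast, hfv]
  · intro i
    by_cases h : s i.castSucc = s i.succ
    · simp only [if_pos h]
      show f (s i.succ) = f (s i.castSucc) + (s i.succ - s i.castSucc) • deriv f 0
      rw [h]; simp
    · simp only [if_neg h]
      show f (s i.succ) = f (s i.castSucc) + (s i.succ - s i.castSucc) •
        ((s i.succ - s i.castSucc)⁻¹ • (f (s i.succ) - f (s i.castSucc)))
      rw [smul_smul, mul_inv_cancel₀ (sub_ne_zero.mpr (Ne.symm h)), one_smul]
      abel
  · intro i t ht0 htd
    by_cases h : s i.castSucc = s i.succ
    · have hd0 : s i.succ - s i.castSucc = 0 := by rw [h]; ring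
      have ht : t = 0 := le_antisymm (by simpa [hd0] using htd) ht0
      simpa [ht] using hsg i 0 ⟨le_rfl, zero_le_one⟩
    · simp only [if_neg h]
      have hd : 0 < s i.succ - s i.castSucc :=
        sub_pos.mpr (lt_of_le_of_ne (hsm i) h)
      have hl0 : 0 ≤ t / (s i.succ - s i.castSucc) := div_nonneg ht0 hd.le
      have hl1 : t / (s i.succ - s i.castSucc) ≤ 1 := (div_le_one hd).mpr htd
      have key := hsg i (t / (s i.succ - s i.castSucc)) ⟨hl0, hl1⟩
      have he : f (s i.castSucc) + t • ((s i.succ - s i.castSucc)⁻¹ •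
            (f (s i.succ) - f (s i.castSucc)))
          = (1 - t / (s i.succ - s i.castSucc)) • f (s i.castSucc)
            + (t / (s i.succ - s i.castSucc)) • f (s i.succ) := by
        rw [smul_smul, show t * (s i.succ - s i.castSucc)⁻¹
            = t / (s i.succ - s i.castSucc) from (div_eq_mul_inv t _).symm,
          smul_sub, sub_smul, one_smul]
        abel
      show f (s i.castSucc) + t • ((s i.succ - s i.castSucc)⁻¹ •
        (f (s i.succ) - f (s i.castSucc))) ∉ V
      rw [he]
      exact key
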